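/- arXiv:2009.04591 — 2 statements merged into one kernel-verified Lean document; each statement's English description precedes it below -/
import Mathlib

section
/- (Convexity of quadratic loss plus SCAD penalty) Let λ > 0, γ > 2, b ∈ ℝ^p, and let Ω be a symmetric p×p matrix whose minimum eigenvalue c_* satisfies c_* > 1/(γ−1). Then the function β ↦ (1/2)(β − b)ᵀΩ(β − b) + Σ_{j=1}^p p_λ(|β_j|) is convex on ℝ^p, despite the nonconvexity of the SCAD penalty. -/
noncomputable section

open Filter MeasureTheory ProbabilityTheory Matrix
open scoped BigOperators ENNReal

/-- The SCAD penalty `p_λ` with tuning parameters `lam = λ > 0`, `gam = γ > 2`. -/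
def scad (lam gam t : ℝ) : ℝ :=
  if |t| ≤ lam then lam * |t|
  else if |t| ≤ gam * lam then -((|t| ^ 2 - 2 * gam * lam * |t| + lam ^ 2) / (2 * (gam - 1)))
  else (gam + 1) * lam ^ 2 / 2

/-- The derivative of the SCAD penalty on `(0, ∞)`:
`p'_λ(t) = λ·[1{t ≤ λ} + ((γλ − t)₊/((γ−1)λ))·1{t > λ}]`. -/
def scadDeriv (lam gam t : ℝ) : ℝ :=
  lam * ((if t ≤ lam then (1 : ℝ) else 0) +
    max (gam * lam - t) 0 / ((gam - 1) * lam) * (if lam < t then (1 : ℝ) else 0))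

/-- The second derivative of the SCAD penalty on `(0, ∞)` (away from the knots). -/
def scadDeriv2 (lam gam t : ℝ) : ℝ :=
  if lam < t ∧ t ≤ gam * lam then -(1 / (gam - 1)) else 0

/-! ### Auxiliary one-dimensional results -/

lemma relu_sq_hasDerivAt (s : ℝ) : HasDerivAt (fun x : ℝ => max x 0 ^ 2) (2 * max s 0) s := by
  rcases lt_trichotomy s 0 with hs | rfl | hs
  · have h0 : (fun x : ℝ => max x 0 ^ 2) =ᶠ[nhds s] fun _ => (0:ℝ) :=
      Filter.eventuallyEq_of_mem (Iio_mem_nhds hs) (fun x hx => by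
        simp [max_eq_right (le_of_lt (Set.mem_Iio.mp hx))])
    have := (hasDerivAt_const s (0:ℝ)).congr_of_eventuallyEq h0
    simpa [max_eq_right hs.le] using this
  · have hIic : HasDerivWithinAt (fun x : ℝ => max x 0 ^ 2) 0 (Set.Iic 0) 0 := by
      refine (hasDerivWithinAt_const (0:ℝ) _ (0:ℝ)).congr (fun x hx => ?_) (by simp)
      simp [max_eq_right (Set.mem_Iic.mp hx)]
    have hIci : HasDerivWithinAt (fun x : ℝ => max x 0 ^ 2) 0 (Set.Ici 0) 0 := by
      have := (hasDerivAt_pow 2 (0:ℝ)).hasDerivWithinAt (s := Set.Ici 0)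
      refine (this.congr (fun x hx => ?_) (by simp)).congr_deriv (by simp)
      simp [max_eq_left (Set.mem_Ici.mp hx)]
    have := hIic.union hIci
    rw [Set.Iic_union_Ici, hasDerivWithinAt_univ] at this
    simpa using this
  · have h0 : (fun x : ℝ => max x 0 ^ 2) =ᶠ[nhds s] fun x => x ^ 2 :=
      Filter.eventuallyEq_of_mem (Ioi_mem_nhds hs) (fun x hx => by
        simp [max_eq_left (le_of_lt (Set.mem_Ioi.mp hx))])
    have := h0.hasDerivAt_iff.mpr (hasDerivAt_pow 2 s)
    simpa [max_eq_left hs.le, mul_comm] using this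

/-- The convex correction `k` such that `scad(|t|) + t²/(2(γ−1)) = λ|t| + k(t)`. -/
def kfun (lam gam t : ℝ) : ℝ :=
  (t ^ 2 - max (|t| - lam) 0 ^ 2 + max (|t| - gam * lam) 0 ^ 2) / (2 * (gam - 1))

/-- The derivative of `kfun`. -/
def Kfun (lam gam t : ℝ) : ℝ :=
  (max (min t lam) (-lam) + (max (t - gam * lam) 0 - max (-t - gam * lam) 0)) / (gam - 1)

lemma hd_pos (c t : ℝ) : HasDerivAt (fun x : ℝ => max (x - c) 0 ^ 2) (2 * max (t - c) 0) t := by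
  have h := (relu_sq_hasDerivAt (t - c)).comp t ((hasDerivAt_id t).sub_const c)
  simpa [Function.comp_def] using h

lemma hd_neg (c t : ℝ) :
    HasDerivAt (fun x : ℝ => max (-x - c) 0 ^ 2) (-(2 * max (-t - c) 0)) t := by
  have h := (relu_sq_hasDerivAt (-t - c)).comp t (((hasDerivAt_id t).neg).sub_const c)
  simpa [mul_comm, Function.comp_def] using h

lemma kfun_hasDerivAt {lam gam : ℝ} (hlam : 0 < lam) (hgam : 2 < gam) (t : ℝ) :
    HasDerivAt (kfun lam gam) (Kfun lam gam t) t := by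
  have hg1 : (1:ℝ) < gam := by linarith
  have hgl : lam < gam * lam := by nlinarith
  have hglpos : 0 < gam * lam := by positivity
  rcases lt_trichotomy t 0 with ht | rfl | ht
  · have heq : kfun lam gam =ᶠ[nhds t]
        fun x => (x ^ 2 - max (-x - lam) 0 ^ 2 + max (-x - gam * lam) 0 ^ 2) / (2 * (gam - 1)) :=
      Filter.eventuallyEq_of_mem (Iio_mem_nhds ht) (fun x hx => by
        have : |x| = -x := abs_of_neg (Set.mem_Iio.mp hx)
        simp [kfun, this])
    have hD : HasDerivAt
        (fun x : ℝ => (x ^ 2 - max (-x - lam) 0 ^ 2 + max (-x - gam * lam) 0 ^ 2) / (2 * (gam - 1)))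
        ((2 * t ^ 1 - -(2 * max (-t - lam) 0) + -(2 * max (-t - gam * lam) 0)) / (2 * (gam - 1))) t :=
      (((hasDerivAt_pow 2 t).sub (hd_neg lam t)).add (hd_neg (gam * lam) t)).div_const _
    have := heq.hasDerivAt_iff.mpr hD
    refine this.congr_deriv ?_
    have h1 : max (t - gam * lam) 0 = 0 := max_eq_right (by linarith)
    have h2 : min t lam = t := min_eq_left (by linarith)
    have h3 : t + max (-t - lam) 0 = max t (-lam) := by
      rcases le_total (-lam) t with h | h
      · rw [max_eq_right (by linarith), max_eq_left h]; ring
      · rw [max_eq_left (by linarith), max_eq_right h]; ring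
    rw [Kfun, h1, h2]
    rw [show max t (-lam) = t + max (-t - lam) 0 from h3.symm]
    have hne : gam - 1 ≠ 0 := by linarith
    field_simp
    ring
  · have heq : kfun lam gam =ᶠ[nhds 0] fun x => x ^ 2 / (2 * (gam - 1)) :=
      Filter.eventuallyEq_of_mem (Ioo_mem_nhds (show -lam < (0:ℝ) by linarith) hlam)
        (fun x hx => by
        obtain ⟨h1, h2⟩ := hx
        have hax : |x| < lam := abs_lt.mpr ⟨h1, h2⟩
        have e1 : max (|x| - lam) 0 = 0 := max_eq_right (by linarith)
        have e2 : max (|x| - gam * lam) 0 = 0 := max_eq_right (by linarith)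
        rw [kfun, e1, e2]
        ring_nf)
    have hD : HasDerivAt (fun x : ℝ => x ^ 2 / (2 * (gam - 1)))
        ((2 * (0:ℝ) ^ 1) / (2 * (gam - 1))) 0 := (hasDerivAt_pow 2 0).div_const _
    have := heq.hasDerivAt_iff.mpr hD
    refine this.congr_deriv ?_
    have e0 : Kfun lam gam 0 = 0 := by
      have e1 : min (0:ℝ) lam = 0 := min_eq_left hlam.le
      have e2 : max (0:ℝ) (-lam) = 0 := max_eq_left (by linarith)
      have e3 : max ((0:ℝ) - gam * lam) 0 = 0 := max_eq_right (by linarith)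
      have e4 : max (-(0:ℝ) - gam * lam) 0 = 0 := max_eq_right (by linarith)
      simp only [Kfun, e1, e2, e3, e4]
      ring
    rw [e0]
    norm_num
  · have heq : kfun lam gam =ᶠ[nhds t]
        fun x => (x ^ 2 - max (x - lam) 0 ^ 2 + max (x - gam * lam) 0 ^ 2) / (2 * (gam - 1)) :=
      Filter.eventuallyEq_of_mem (Ioi_mem_nhds ht) (fun x hx => by
        have : |x| = x := abs_of_pos (Set.mem_Ioi.mp hx)
        simp [kfun, this])
    have hD : HasDerivAt
        (fun x : ℝ => (x ^ 2 - max (x - lam) 0 ^ 2 + max (x - gam * lam) 0 ^ 2) / (2 * (gam - 1)))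
        ((2 * t ^ 1 - 2 * max (t - lam) 0 + 2 * max (t - gam * lam) 0) / (2 * (gam - 1))) t :=
      (((hasDerivAt_pow 2 t).sub (hd_pos lam t)).add (hd_pos (gam * lam) t)).div_const _
    have := heq.hasDerivAt_iff.mpr hD
    refine this.congr_deriv ?_
    have h1 : max (-t - gam * lam) 0 = 0 := max_eq_right (by linarith)
    have h2 : max (min t lam) (-lam) = min t lam := max_eq_left (le_min (by linarith) (by linarith))
    have h3 : t - max (t - lam) 0 = min t lam := by
      rcases le_total t lam with h | h
      · rw [max_eq_right (by linarith), min_eq_left h]; ring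
      · rw [max_eq_left (by linarith), min_eq_right h]; ring
    rw [Kfun, h1, h2, ← h3]
    have hne : gam - 1 ≠ 0 := by linarith
    field_simp
    ring

lemma Kfun_monotone {lam gam : ℝ} (hlam : 0 < lam) (hgam : 2 < gam) :
    Monotone (Kfun lam gam) := by
  intro a b hab
  have hg : (0:ℝ) < gam - 1 := by linarith
  unfold Kfun
  gcongr <;> linarith

lemma kfun_convex {lam gam : ℝ} (hlam : 0 < lam) (hgam : 2 < gam) :
    ConvexOn ℝ Set.univ (kfun lam gam) := by
  have hdiff : Differentiable ℝ (kfun lam gam) :=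
    fun t => (kfun_hasDerivAt hlam hgam t).differentiableAt
  have hderiv : deriv (kfun lam gam) = Kfun lam gam :=
    funext fun t => (kfun_hasDerivAt hlam hgam t).deriv
  exact Monotone.convexOn_univ_of_deriv hdiff (hderiv ▸ Kfun_monotone hlam hgam)

lemma hfun_convex {lam gam : ℝ} (hlam : 0 < lam) (hgam : 2 < gam) :
    ConvexOn ℝ Set.univ (fun t : ℝ => lam * |t| + kfun lam gam t) := by
  have habs : ConvexOn ℝ Set.univ (fun t : ℝ => |t|) := by
    have h := convexOn_univ_norm (E := ℝ)
    rw [show (norm : ℝ → ℝ) = fun t => |t| from funext Real.norm_eq_abs] at h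
    exact h
  have h1 : ConvexOn ℝ Set.univ (fun t : ℝ => lam * |t|) := by
    simpa [smul_eq_mul] using habs.smul hlam.le
  exact h1.add (kfun_convex hlam hgam)

lemma scad_eq {lam gam : ℝ} (hlam : 0 < lam) (hgam : 2 < gam) (x : ℝ) :
    scad lam gam |x| + x ^ 2 / (2 * (gam - 1)) = lam * |x| + kfun lam gam x := by
  have hg1 : (1:ℝ) < gam := by linarith
  have hgl : lam < gam * lam := by nlinarith
  have hne : gam - 1 ≠ 0 := by linarith
  unfold scad kfun
  rw [abs_abs]
  rcases le_or_gt |x| lam with h1 | h1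
  · rw [if_pos h1]
    have e1 : max (|x| - lam) 0 = 0 := max_eq_right (by linarith)
    have e2 : max (|x| - gam * lam) 0 = 0 := max_eq_right (by linarith)
    rw [e1, e2]
    ring
  · rw [if_neg (not_le.mpr h1)]
    have e1 : max (|x| - lam) 0 = |x| - lam := max_eq_left (by linarith)
    rcases le_or_gt |x| (gam * lam) with h2 | h2
    · rw [if_pos h2]
      have e2 : max (|x| - gam * lam) 0 = 0 := max_eq_right (by linarith)
      rw [e1, e2, ← sq_abs x]
      field_simp
      ring
    · rw [if_neg (not_le.mpr h2)]
      have e2 : max (|x| - gam * lam) 0 = |x| - gam * lam := max_eq_left (by linarith)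
      rw [e1, e2, ← sq_abs x]
      field_simp
      ring

/-! ### Auxiliary multivariate results -/

lemma rayleigh {p : ℕ} (Om : Matrix (Fin p) (Fin p) ℝ) (hherm : Om.IsHermitian) (c : ℝ)
    (heig : ∀ i, c ≤ hherm.eigenvalues i) (z : Fin p → ℝ) :
    c * (z ⬝ᵥ z) ≤ z ⬝ᵥ Om *ᵥ z := by
  classical
  set U : Matrix (Fin p) (Fin p) ℝ := (hherm.eigenvectorUnitary : Matrix (Fin p) (Fin p) ℝ) with hU
  have hstar : star U = Uᵀ := by
    rw [Matrix.star_eq_conjTranspose, Matrix.conjTranspose_eq_transpose_of_trivial]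
  set w : Fin p → ℝ := Uᵀ *ᵥ z with hw
  have hUU : U * Uᵀ = 1 := by
    have := (Matrix.mem_unitaryGroup_iff).mp hherm.eigenvectorUnitary.2
    rwa [hstar] at this
  have hzz : z ⬝ᵥ z = w ⬝ᵥ w := by
    rw [hw, Matrix.dotProduct_mulVec, ← Matrix.transpose_transpose U, Matrix.vecMul_transpose,
      Matrix.transpose_transpose, Matrix.mulVec_mulVec, hUU, Matrix.one_mulVec]
  have hq : z ⬝ᵥ Om *ᵥ z = ∑ i, hherm.eigenvalues i * (w i) ^ 2 := by
    conv_lhs => rw [hherm.spectral_theorem, Unitary.conjStarAlgAut_apply]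
    rw [← hU, hstar]
    rw [← Matrix.mulVec_mulVec, ← Matrix.mulVec_mulVec]
    rw [Matrix.dotProduct_mulVec, ← Matrix.transpose_transpose U, Matrix.vecMul_transpose,
      Matrix.transpose_transpose, ← hw]
    simp only [dotProduct, Matrix.mulVec_diagonal]
    refine Finset.sum_congr rfl fun i _ => ?_
    simp [Function.comp]
    ring
  rw [hzz, hq, dotProduct, Finset.mul_sum]
  refine Finset.sum_le_sum fun i _ => ?_
  have := heig i
  nlinarith [sq_nonneg (w i)]

lemma quad_convex {p : ℕ} (gam : ℝ) (hgam : 2 < gam) (b : Fin p → ℝ)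
    (Om : Matrix (Fin p) (Fin p) ℝ) (hherm : Om.IsHermitian)
    (heig : ∀ i, 1 / (gam - 1) < hherm.eigenvalues i) :
    ConvexOn ℝ Set.univ (fun beta : Fin p → ℝ =>
      (1 / 2) * ((beta - b) ⬝ᵥ Om *ᵥ (beta - b)) - (1 / (2 * (gam - 1))) * (beta ⬝ᵥ beta)) := by
  have hne : gam - 1 ≠ 0 := by intro h; linarith [hgam]
  have hsy : Omᵀ = Om := by
    rw [← Matrix.conjTranspose_eq_transpose_of_trivial]; exact hherm
  have hsymm : ∀ u v : Fin p → ℝ, u ⬝ᵥ Om *ᵥ v = v ⬝ᵥ Om *ᵥ u := by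
    intro u v
    rw [Matrix.dotProduct_mulVec, ← hsy, Matrix.vecMul_transpose, hsy, dotProduct_comm]
  have hbil : ∀ (s t : ℝ) (u v : Fin p → ℝ),
      (s • u + t • v) ⬝ᵥ Om *ᵥ (s • u + t • v) =
        s ^ 2 * (u ⬝ᵥ Om *ᵥ u) + 2 * s * t * (u ⬝ᵥ Om *ᵥ v) + t ^ 2 * (v ⬝ᵥ Om *ᵥ v) := by
    intro s t u v
    rw [Matrix.mulVec_add, Matrix.mulVec_smul, Matrix.mulVec_smul]
    simp only [dotProduct_add, add_dotProduct, dotProduct_smul,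
      smul_dotProduct, smul_eq_mul]
    rw [hsymm v u]
    ring
  have hbil' : ∀ (s t : ℝ) (u v : Fin p → ℝ),
      (s • u + t • v) ⬝ᵥ (s • u + t • v) =
        s ^ 2 * (u ⬝ᵥ u) + 2 * s * t * (u ⬝ᵥ v) + t ^ 2 * (v ⬝ᵥ v) := by
    intro s t u v
    simp only [dotProduct_add, add_dotProduct, dotProduct_smul,
      smul_dotProduct, smul_eq_mul]
    rw [dotProduct_comm v u]
    ring
  refine ⟨convex_univ, ?_⟩
  intro x _ y _ a c ha hc hac
  obtain rfl : c = 1 - a := by linarith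
  set u := x - b with hu
  set v := y - b with hv
  have h1 : (a • x + (1 - a) • y) - b = a • u + (1 - a) • v := by
    funext i
    simp only [Pi.sub_apply, Pi.add_apply, Pi.smul_apply, smul_eq_mul, hu, hv]
    ring
  have e1 : x - y = (1 : ℝ) • u + (-1 : ℝ) • v := by
    funext i
    simp only [Pi.sub_apply, Pi.add_apply, Pi.smul_apply, smul_eq_mul, hu, hv]
    ring
  have e1' : x - y = (1 : ℝ) • x + (-1 : ℝ) • y := by
    funext i
    simp only [Pi.sub_apply, Pi.add_apply, Pi.smul_apply, smul_eq_mul]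
    ring
  have hkey := rayleigh Om hherm (1 / (gam - 1)) (fun i => (heig i).le) (x - y)
  rw [show (x - y) ⬝ᵥ Om *ᵥ (x - y) =
      1 ^ 2 * (u ⬝ᵥ Om *ᵥ u) + 2 * 1 * (-1) * (u ⬝ᵥ Om *ᵥ v) + (-1) ^ 2 * (v ⬝ᵥ Om *ᵥ v) from by
        rw [e1, hbil]] at hkey
  rw [show (x - y) ⬝ᵥ (x - y) =
      1 ^ 2 * (x ⬝ᵥ x) + 2 * 1 * (-1) * (x ⬝ᵥ y) + (-1) ^ 2 * (y ⬝ᵥ y) from by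
        rw [e1', hbil']] at hkey
  simp only [smul_eq_mul]
  rw [h1, hbil, hbil']
  rw [show x - b = u from rfl, show y - b = v from rfl]
  set quu := u ⬝ᵥ Om *ᵥ u
  set quv := u ⬝ᵥ Om *ᵥ v
  set qvv := v ⬝ᵥ Om *ᵥ v
  set sxx := x ⬝ᵥ x
  set sxy := x ⬝ᵥ y
  set syy := y ⬝ᵥ y
  have hac' : 0 ≤ a * (1 - a) := mul_nonneg ha hc
  have hkey2 : 0 ≤ a * (1 - a) *
      ((quu - 2 * quv + qvv) - (1 / (gam - 1)) * (sxx - 2 * sxy + syy)) := by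
    apply mul_nonneg hac'
    nlinarith [hkey]
  have hident : a * ((1:ℝ)/2 * quu - 1/(2*(gam-1)) * sxx) +
      (1 - a) * ((1:ℝ)/2 * qvv - 1/(2*(gam-1)) * syy) -
      ((1:ℝ)/2 * (a^2*quu + 2*a*(1-a)*quv + (1-a)^2*qvv) -
        1/(2*(gam-1)) * (a^2*sxx + 2*a*(1-a)*sxy + (1-a)^2*syy)) =
      (a * (1 - a) / 2) * ((quu - 2*quv + qvv) - (1/(gam-1)) * (sxx - 2*sxy + syy)) := by
    field_simp
    ring
  linarith [hident, hkey2]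

/-- **Convexity of quadratic loss plus SCAD penalty.** Let `λ > 0`, `γ > 2`, `b ∈ ℝ^p`, and let
`Ω` be a symmetric `p×p` matrix whose eigenvalues all exceed `1/(γ−1)` (i.e. its minimum
eigenvalue `c_*` satisfies `c_* > 1/(γ−1)`). Then
`β ↦ (1/2)(β − b)ᵀΩ(β − b) + Σ_j p_λ(|β_j|)` is convex on `ℝ^p`. -/
theorem scad_quadratic_convex (lam gam : ℝ) (hlam : 0 < lam) (hgam : 2 < gam)
    (p : ℕ) (b : Fin p → ℝ) (Om : Matrix (Fin p) (Fin p) ℝ)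
    (hherm : Om.IsHermitian)
    (heig : ∀ i, 1 / (gam - 1) < hherm.eigenvalues i) :
    ConvexOn ℝ Set.univ (fun beta : Fin p → ℝ =>
      (1 / 2) * ((beta - b) ⬝ᵥ (Om *ᵥ (beta - b))) + ∑ j, scad lam gam |beta j|) := by
  classical
  have hconv1 : ConvexOn ℝ Set.univ (fun t : ℝ => lam * |t| + kfun lam gam t) :=
    hfun_convex hlam hgam
  have hcoord : ∀ j : Fin p, ConvexOn ℝ Set.univ
      (fun beta : Fin p → ℝ => lam * |beta j| + kfun lam gam (beta j)) := by
    intro j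
    have := hconv1.comp_linearMap (LinearMap.proj (R := ℝ) (φ := fun _ : Fin p => ℝ) j)
    simpa [Function.comp_def, Function.eval] using this
  have hGsum : ∀ s : Finset (Fin p), ConvexOn ℝ Set.univ
      (fun beta : Fin p → ℝ => ∑ j ∈ s, (lam * |beta j| + kfun lam gam (beta j))) := by
    intro s
    induction s using Finset.induction with
    | empty => simpa using convexOn_const (0:ℝ) convex_univ
    | insert _ _ hj ih =>
        simp only [Finset.sum_insert hj]
        exact (hcoord _).add ih
  have hF := quad_convex gam hgam b Om hherm heig
  have heqfun : (fun beta : Fin p → ℝ =>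
      (1 / 2) * ((beta - b) ⬝ᵥ (Om *ᵥ (beta - b))) + ∑ j, scad lam gam |beta j|) =
      fun beta : Fin p → ℝ =>
        ((1 / 2) * ((beta - b) ⬝ᵥ Om *ᵥ (beta - b)) - (1 / (2 * (gam - 1))) * (beta ⬝ᵥ beta)) +
        ∑ j, (lam * |beta j| + kfun lam gam (beta j)) := by
    funext beta
    have hsum : ∑ j, (lam * |beta j| + kfun lam gam (beta j)) =
        ∑ j, (scad lam gam |beta j| + (beta j) ^ 2 / (2 * (gam - 1))) :=
      Finset.sum_congr rfl fun j _ => (scad_eq hlam hgam (beta j)).symm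
    rw [hsum, Finset.sum_add_distrib]
    have hdd : ∑ j, (beta j) ^ 2 / (2 * (gam - 1)) =
        (1 / (2 * (gam - 1))) * (beta ⬝ᵥ beta) := by
      rw [dotProduct, Finset.mul_sum]
      exact Finset.sum_congr rfl fun j _ => by ring
    rw [hdd]
    ring
  rw [heqfun]
  exact hF.add (hGsum Finset.univ)
end
end

section
/- (SCAD univariate thresholding rule) Let λ > 0, γ > 2 and z ∈ ℝ. The function β ↦ (1/2)(z − β)² + p_λ(|β|) attains its global minimum over ℝ at β̂ given by: β̂ = sign(z)(|z| − λ)₊ if |z| ≤ 2λ; β̂ = ((γ−1)z − sign(z)γλ)/(γ−2) if 2λ < |z| ≤ γλ; and β̂ = z if |z| > γλ, where (a)₊ = max(a, 0). -/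
noncomputable section

open Filter MeasureTheory ProbabilityTheory Matrix
open scoped BigOperators ENNReal

/-- The SCAD univariate thresholding rule. -/
def scadThresh (lam gam z : ℝ) : ℝ :=
  if |z| ≤ 2 * lam then Real.sign z * max (|z| - lam) 0
  else if |z| ≤ gam * lam then ((gam - 1) * z - Real.sign z * (gam * lam)) / (gam - 2)
  else z

lemma scad_low {lam gam t : ℝ} (h0 : 0 ≤ t) (h : t ≤ lam) : scad lam gam t = lam * t := by
  rw [scad, abs_of_nonneg h0, if_pos h]

lemma scad_mid {lam gam t : ℝ} (h0 : 0 ≤ t) (h1 : lam < t) (h2 : t ≤ gam * lam) :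
    scad lam gam t = -((t ^ 2 - 2 * gam * lam * t + lam ^ 2) / (2 * (gam - 1))) := by
  rw [scad, abs_of_nonneg h0, if_neg (not_le.mpr h1), if_pos h2]

lemma scad_high {lam gam t : ℝ} (hlam : 0 < lam) (hgam : 2 < gam)
    (h0 : 0 ≤ t) (h : gam * lam < t) :
    scad lam gam t = (gam + 1) * lam ^ 2 / 2 := by
  have h1 : lam < t := by nlinarith
  rw [scad, abs_of_nonneg h0, if_neg (not_le.mpr h1), if_neg (not_le.mpr h)]

lemma scad_abs (lam gam b : ℝ) : scad lam gam |b| = scad lam gam b := by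
  simp [scad, abs_abs]

set_option maxHeartbeats 1000000 in
/-- The key inequality for `z ≥ 0`, `b ≥ 0`. -/
lemma scad_key (lam gam z b : ℝ) (hlam : 0 < lam) (hgam : 2 < gam)
    (hz : 0 ≤ z) (hb : 0 ≤ b) :
    (1 / 2) * (z - scadThresh lam gam z) ^ 2 + scad lam gam (scadThresh lam gam z)
      ≤ (1 / 2) * (z - b) ^ 2 + scad lam gam b := by
  have hzabs : |z| = z := abs_of_nonneg hz
  have hg1 : (0:ℝ) < gam - 1 := by linarith
  have hg2 : (0:ℝ) < gam - 2 := by linarith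
  have hg1' : gam - 1 ≠ 0 := ne_of_gt hg1
  have hg2' : gam - 2 ≠ 0 := ne_of_gt hg2
  rcases le_or_gt z (2 * lam) with hA | hA
  · -- |z| ≤ 2λ
    have hthresh : scadThresh lam gam z = max (z - lam) 0 := by
      rw [scadThresh, if_pos (by rwa [hzabs]), hzabs]
      rcases eq_or_lt_of_le hz with h0 | h0
      · rw [← h0, Real.sign_zero, zero_mul,
          max_eq_right (by linarith : (0:ℝ) - lam ≤ 0)]
      · rw [Real.sign_of_pos h0, one_mul]
    rw [hthresh]
    rcases le_or_gt z lam with hA1 | hA1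
    · -- Case A1 : z ≤ λ, thresh = 0
      have hm : max (z - lam) 0 = 0 := max_eq_right (by linarith)
      rw [hm, scad_low le_rfl hlam.le]
      rcases le_or_gt b lam with hR | hR
      · rw [scad_low hb hR]
        nlinarith [mul_nonneg hb (by linarith : (0:ℝ) ≤ lam - z), sq_nonneg b]
      · rcases le_or_gt b (gam * lam) with hR2 | hR2
        · rw [scad_mid hb hR hR2]
          have hkey : ((1:ℝ) / 2) * (z - b) ^ 2 + -((b ^ 2 - 2 * gam * lam * b + lam ^ 2) / (2 * (gam - 1)))
              - (((1:ℝ) / 2) * (z - 0) ^ 2 + lam * 0)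
              = ((gam - 2) * b ^ 2 + 2 * (gam - 1) * (b * (lam - z)) + 2 * (lam * (b - lam)) + lam ^ 2)
                / (2 * (gam - 1)) := by
            field_simp
            ring
          have c0 : 0 ≤ (gam - 2) * b ^ 2 + 2 * (gam - 1) * (b * (lam - z)) + 2 * (lam * (b - lam)) + lam ^ 2 := by
            nlinarith [mul_nonneg hg2.le (sq_nonneg b), mul_nonneg hb (by linarith : (0:ℝ) ≤ lam - z),
              mul_nonneg hlam.le (by linarith : (0:ℝ) ≤ b - lam), sq_nonneg lam, hg1]
          nlinarith [div_nonneg c0 (by linarith : (0:ℝ) ≤ 2 * (gam - 1)), hkey]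
        · rw [scad_high hlam hgam hb hR2]
          nlinarith [mul_nonneg hb (by linarith : (0:ℝ) ≤ b - gam * lam),
            mul_nonneg hb (by linarith : (0:ℝ) ≤ lam - z),
            mul_nonneg (mul_nonneg hg2.le hlam.le) hb, sq_nonneg lam,
            mul_pos hlam hlam]
    · -- Case A2 : λ < z ≤ 2λ, thresh = z - λ
      have hm : max (z - lam) 0 = z - lam := max_eq_left (by linarith)
      rw [hm, scad_low (by linarith) (by linarith)]
      rcases le_or_gt b lam with hR | hR
      · rw [scad_low hb hR]
        nlinarith [sq_nonneg (z - b - lam)]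
      · rcases le_or_gt b (gam * lam) with hR2 | hR2
        · rw [scad_mid hb hR hR2]
          have hkey : ((1:ℝ) / 2) * (z - b) ^ 2 + -((b ^ 2 - 2 * gam * lam * b + lam ^ 2) / (2 * (gam - 1)))
              - (((1:ℝ) / 2) * (z - (z - lam)) ^ 2 + lam * (z - lam))
              = ((gam - 2) * (b - lam) ^ 2 + 2 * (gam - 1) * ((b - lam) * (2 * lam - z))
                  + (gam - 1) * (2 * lam - z) ^ 2) / (2 * (gam - 1)) := by
            field_simp
            ring
          have c0 : 0 ≤ (gam - 2) * (b - lam) ^ 2 + 2 * (gam - 1) * ((b - lam) * (2 * lam - z))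
              + (gam - 1) * (2 * lam - z) ^ 2 := by
            have := mul_nonneg (by linarith : (0:ℝ) ≤ b - lam) (by linarith : (0:ℝ) ≤ 2 * lam - z)
            nlinarith [mul_nonneg hg2.le (sq_nonneg (b - lam)), mul_nonneg hg1.le (sq_nonneg (2 * lam - z))]
          nlinarith [div_nonneg c0 (by linarith : (0:ℝ) ≤ 2 * (gam - 1)), hkey]
        · rw [scad_high hlam hgam hb hR2]
          nlinarith [sq_nonneg (z - b), mul_nonneg hlam.le (by linarith : (0:ℝ) ≤ 2 * lam - z),
            mul_nonneg hg2.le (sq_nonneg lam)]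
  · rcases le_or_gt z (gam * lam) with hB | hB
    · -- Case B : 2λ < z ≤ γλ
      have hsign : Real.sign z = 1 := Real.sign_of_pos (by linarith)
      have hthresh : scadThresh lam gam z = ((gam - 1) * z - gam * lam) / (gam - 2) := by
        rw [scadThresh, hzabs, if_neg (not_le.mpr hA), if_pos hB, hsign, one_mul]
      rw [hthresh]
      have hb0l : lam < ((gam - 1) * z - gam * lam) / (gam - 2) := by
        rw [lt_div_iff₀ hg2]; nlinarith
      have hb0u : ((gam - 1) * z - gam * lam) / (gam - 2) ≤ gam * lam := by
        rw [div_le_iff₀ hg2]; nlinarith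
      rw [scad_mid (by linarith : (0:ℝ) ≤ ((gam - 1) * z - gam * lam) / (gam - 2)) hb0l hb0u]
      rcases le_or_gt b lam with hR | hR
      · rw [scad_low hb hR]
        have hkey : ((1:ℝ) / 2) * (z - b) ^ 2 + lam * b
            - (((1:ℝ) / 2) * (z - ((gam - 1) * z - gam * lam) / (gam - 2)) ^ 2
              + -(((((gam - 1) * z - gam * lam) / (gam - 2)) ^ 2
                  - 2 * gam * lam * (((gam - 1) * z - gam * lam) / (gam - 2)) + lam ^ 2) / (2 * (gam - 1))))
            = (gam - 1) * (z - 2 * lam) ^ 2 / (2 * (gam - 2)) + (lam - b) * (z - 2 * lam)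
              + (1 / 2) * (lam - b) ^ 2 := by
          field_simp
          ring
        have c0 : 0 ≤ (gam - 1) * (z - 2 * lam) ^ 2 / (2 * (gam - 2)) :=
          div_nonneg (mul_nonneg hg1.le (sq_nonneg _)) (by linarith)
        have c1 : 0 ≤ (lam - b) * (z - 2 * lam) :=
          mul_nonneg (by linarith) (by linarith)
        nlinarith [hkey, c0, c1, sq_nonneg (lam - b)]
      · rcases le_or_gt b (gam * lam) with hR2 | hR2
        · rw [scad_mid hb hR hR2]
          have hkey : ((1:ℝ) / 2) * (z - b) ^ 2 + -((b ^ 2 - 2 * gam * lam * b + lam ^ 2) / (2 * (gam - 1)))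
              - (((1:ℝ) / 2) * (z - ((gam - 1) * z - gam * lam) / (gam - 2)) ^ 2
                + -(((((gam - 1) * z - gam * lam) / (gam - 2)) ^ 2
                    - 2 * gam * lam * (((gam - 1) * z - gam * lam) / (gam - 2)) + lam ^ 2) / (2 * (gam - 1))))
              = ((gam - 2) * b - (gam - 1) * z + gam * lam) ^ 2 / (2 * (gam - 1) * (gam - 2)) := by
            field_simp
            ring
          have c0 : 0 ≤ ((gam - 2) * b - (gam - 1) * z + gam * lam) ^ 2 / (2 * (gam - 1) * (gam - 2)) :=
            div_nonneg (sq_nonneg _) (by nlinarith)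
          linarith [hkey, c0]
        · rw [scad_high hlam hgam hb hR2]
          have hkey : ((1:ℝ) / 2) * (z - b) ^ 2 + (gam + 1) * lam ^ 2 / 2
              - (((1:ℝ) / 2) * (z - ((gam - 1) * z - gam * lam) / (gam - 2)) ^ 2
                + -(((((gam - 1) * z - gam * lam) / (gam - 2)) ^ 2
                    - 2 * gam * lam * (((gam - 1) * z - gam * lam) / (gam - 2)) + lam ^ 2) / (2 * (gam - 1))))
              = (gam - 1) * (gam * lam - z) ^ 2 / (2 * (gam - 2)) + (b - gam * lam) * (gam * lam - z)
                + (1 / 2) * (b - gam * lam) ^ 2 := by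
            field_simp
            ring
          have c0 : 0 ≤ (gam - 1) * (gam * lam - z) ^ 2 / (2 * (gam - 2)) :=
            div_nonneg (mul_nonneg hg1.le (sq_nonneg _)) (by linarith)
          have c1 : 0 ≤ (b - gam * lam) * (gam * lam - z) :=
            mul_nonneg (by linarith) (by linarith)
          nlinarith [hkey, c0, c1, sq_nonneg (b - gam * lam)]
    · -- Case C : z > γλ, thresh = z
      have hthresh : scadThresh lam gam z = z := by
        rw [scadThresh, hzabs, if_neg (not_le.mpr hA), if_neg (not_le.mpr hB)]
      rw [hthresh, scad_high hlam hgam hz hB]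
      rcases le_or_gt b lam with hR | hR
      · rw [scad_low hb hR]
        nlinarith [sq_nonneg ((z - gam * lam) + (lam - b)),
          mul_nonneg (mul_nonneg hg1.le hlam.le) (by linarith : (0:ℝ) ≤ z - gam * lam),
          mul_nonneg hg2.le (mul_nonneg hlam.le (by linarith : (0:ℝ) ≤ lam - b)),
          mul_nonneg (mul_nonneg hg1.le hg2.le) (sq_nonneg lam), mul_pos hg1 hg2, mul_pos hlam hlam]
      · rcases le_or_gt b (gam * lam) with hR2 | hR2
        · rw [scad_mid hb hR hR2]
          have hkey : ((1:ℝ) / 2) * (z - b) ^ 2 + -((b ^ 2 - 2 * gam * lam * b + lam ^ 2) / (2 * (gam - 1)))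
              - (((1:ℝ) / 2) * (z - z) ^ 2 + (gam + 1) * lam ^ 2 / 2)
              = ((gam - 1) * (z - gam * lam) ^ 2 + 2 * (gam - 1) * ((z - gam * lam) * (gam * lam - b))
                  + (gam - 2) * (gam * lam - b) ^ 2) / (2 * (gam - 1)) := by
            field_simp
            ring
          have c0 : 0 ≤ (gam - 1) * (z - gam * lam) ^ 2 + 2 * (gam - 1) * ((z - gam * lam) * (gam * lam - b))
              + (gam - 2) * (gam * lam - b) ^ 2 := by
            have := mul_nonneg (by linarith : (0:ℝ) ≤ z - gam * lam) (by linarith : (0:ℝ) ≤ gam * lam - b)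
            nlinarith [mul_nonneg hg1.le (sq_nonneg (z - gam * lam)), mul_nonneg hg2.le (sq_nonneg (gam * lam - b))]
          nlinarith [div_nonneg c0 (by linarith : (0:ℝ) ≤ 2 * (gam - 1)), hkey]
        · rw [scad_high hlam hgam hb hR2]
          nlinarith [sq_nonneg (z - b)]

lemma scadThresh_neg (lam gam z : ℝ) :
    scadThresh lam gam (-z) = -scadThresh lam gam z := by
  simp only [scadThresh, abs_neg, Real.sign_neg]
  split_ifs <;> ring

lemma sq_abs_le_aux (w c : ℝ) (hw : 0 ≤ w) : (w - |c|) ^ 2 ≤ (w - c) ^ 2 := by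
  rcases abs_cases c with ⟨h, _⟩ | ⟨h, hneg⟩
  · rw [h]
  · rw [h]; nlinarith [mul_nonneg hw (by linarith : (0:ℝ) ≤ -c)]

/-- **SCAD univariate thresholding rule.** -/
theorem scad_thresholding (lam gam z : ℝ) (hlam : 0 < lam) (hgam : 2 < gam) :
    IsMinOn (fun beta : ℝ => (1 / 2) * (z - beta) ^ 2 + scad lam gam |beta|) Set.univ
      (scadThresh lam gam z) := by
  intro b _
  simp only [Set.mem_setOf_eq, scad_abs]
  rcases le_or_gt 0 z with hz | hz
  · have h1 := scad_key lam gam z |b| hlam hgam hz (abs_nonneg b)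
    rw [scad_abs] at h1
    have h2 : (z - |b|) ^ 2 ≤ (z - b) ^ 2 := sq_abs_le_aux z b hz
    linarith
  · have h1 := scad_key lam gam (-z) |b| hlam hgam (by linarith) (abs_nonneg b)
    rw [scad_abs] at h1
    have h2 : (-z - |b|) ^ 2 ≤ (-z - -b) ^ 2 := by
      have := sq_abs_le_aux (-z) (-b) (by linarith)
      rwa [abs_neg] at this
    have hthr : scadThresh lam gam z = -scadThresh lam gam (-z) := by
      rw [← scadThresh_neg, neg_neg]
    rw [hthr]
    have e1 : scad lam gam (-scadThresh lam gam (-z)) = scad lam gam (scadThresh lam gam (-z)) := by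
      rw [← scad_abs, abs_neg, scad_abs]
    rw [e1]
    nlinarith [h1, h2]
end
end
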